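/- With γ the unique positive solution to (p/(p-1))·(γ^{1/p'}+1)/(γ+1) = γ^{-1/p} and 1 < p < ∞, p' = p/(p-1), the value x = (p/(p-1))·(γ^{1/p'}+1)/(γ+1) satisfies (p-1)x^p − p x^{p-1} − 1 = 0. -/

import Mathlib

/-- If `γ > 0` solves `(p/(p-1))·(γ^(1/p') + 1)/(γ + 1) = γ^(-1/p)` with
`1/p' = (p-1)/p`, then `x = (p/(p-1))·(γ^(1/p') + 1)/(γ + 1)` is a root of
`(p-1)x^p - px^(p-1) - 1 = 0`. -/
theorem gamma_value_is_root (p γ : ℝ) (hp : 1 < p) (hγ : 0 < γ)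
    (hγeq : p / (p - 1) * ((γ ^ ((p - 1) / p) + 1) / (γ + 1)) = γ ^ (-(1 / p))) :
    (p - 1) * (p / (p - 1) * ((γ ^ ((p - 1) / p) + 1) / (γ + 1))) ^ p
      - p * (p / (p - 1) * ((γ ^ ((p - 1) / p) + 1) / (γ + 1))) ^ (p - 1)
      - 1 = 0 := by
  have hp0 : (0:ℝ) < p := by linarith
  have hp1 : (0:ℝ) < p - 1 := by linarith
  have hγ1 : (0:ℝ) < γ + 1 := by linarith
  have ha : (0:ℝ) < γ ^ ((p - 1) / p) := Real.rpow_pos_of_pos hγ _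
  have hb : (0:ℝ) < γ ^ (-(1 / p)) := Real.rpow_pos_of_pos hγ _
  -- a = γ * b
  have hab : γ ^ ((p - 1) / p) = γ * γ ^ (-(1 / p)) := by
    rw [show γ * γ ^ (-(1/p)) = γ ^ (1:ℝ) * γ ^ (-(1/p)) by rw [Real.rpow_one],
      ← Real.rpow_add hγ]
    congr 1
    field_simp
    ring
  -- key linear relation: a + p = (p-1) * b
  have key : γ ^ ((p - 1) / p) + p = (p - 1) * γ ^ (-(1 / p)) := by
    have h := hγeq
    field_simp at h
    rw [hab] at h ⊢
    linear_combination h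
  rw [hγeq]
  have h1 : (γ ^ (-(1 / p))) ^ p = γ⁻¹ := by
    rw [← Real.rpow_mul hγ.le, show -(1/p) * p = -1 by field_simp, Real.rpow_neg_one]
  have h2 : (γ ^ (-(1 / p))) ^ (p - 1) = (γ ^ ((p - 1) / p))⁻¹ := by
    rw [← Real.rpow_mul hγ.le, show -(1/p) * (p-1) = -((p-1)/p) by field_simp,
      Real.rpow_neg hγ.le]
  rw [h1, h2]
  field_simp
  nlinarith [key, hab, ha, hb, hγ]
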